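/- Let I ⊆ ℝ₊ be a nonempty interval with inf(I·I^{-1}) = 0 (i.e., inf I = 0 or sup I = ∞) and n ≥ 2. Then Γ_n(I) is a cone: for all t > 0 and all ((r,s),(p,q)) ∈ Γ_n(I), also ((tr,ts),(tp,tq)) ∈ Γ_n(I). -/

import Mathlib

open Real Finset Pointwise

noncomputable def gini (p q : ℝ) {n : ℕ} (x : Fin n → ℝ) : ℝ :=
  if p = q then Real.exp ((∑ i, x i ^ p * Real.log (x i)) / ∑ i, x i ^ p)
  else ((∑ i, x i ^ p) / ∑ i, x i ^ q) ^ (1 / (p - q))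
def Gamma (n : ℕ) (I : Set ℝ) : Set ((ℝ × ℝ) × (ℝ × ℝ)) :=
  {w | ∀ x : Fin n → ℝ, (∀ i, x i ∈ I) → gini w.1.1 w.1.2 x ≤ gini w.2.1 w.2.2 x}

lemma sum_rpow_pos {n : ℕ} (hn : 0 < n) (x : Fin n → ℝ) (hx : ∀ i, 0 < x i) (p : ℝ) :
    0 < ∑ i, x i ^ p := by
  haveI : Nonempty (Fin n) := Fin.pos_iff_nonempty.mp hn
  exact Finset.sum_pos (fun i _ => Real.rpow_pos_of_pos (hx i) p) Finset.univ_nonempty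

lemma gini_pos {n : ℕ} (hn : 0 < n) (p q : ℝ) (x : Fin n → ℝ) (hx : ∀ i, 0 < x i) :
    0 < gini p q x := by
  unfold gini
  split
  · exact Real.exp_pos _
  · exact Real.rpow_pos_of_pos
      (div_pos (sum_rpow_pos hn x hx p) (sum_rpow_pos hn x hx q)) _

lemma gini_smul {n : ℕ} (hn : 0 < n) (p q c : ℝ) (hc : 0 < c) (x : Fin n → ℝ)
    (hx : ∀ i, 0 < x i) :
    gini p q (fun i => c * x i) = c * gini p q x := by
  have hsum : ∀ r : ℝ, ∑ i, (c * x i) ^ r = c ^ r * ∑ i, x i ^ r := by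
    intro r
    rw [Finset.mul_sum]
    exact Finset.sum_congr rfl fun i _ => Real.mul_rpow hc.le (hx i).le
  unfold gini
  split
  case isTrue h =>
    subst h
    have hS := sum_rpow_pos hn x hx p
    have hcp : (0:ℝ) < c ^ p := Real.rpow_pos_of_pos hc p
    have hlog : ∀ i, (c * x i : ℝ) ^ p * Real.log (c * x i)
        = c ^ p * (x i ^ p * Real.log c + x i ^ p * Real.log (x i)) := by
      intro i
      rw [Real.mul_rpow hc.le (hx i).le, Real.log_mul hc.ne' (hx i).ne']
      ring
    rw [hsum]
    calc
      Real.exp ((∑ i, (c * x i) ^ p * Real.log (c * x i)) / (c ^ p * ∑ i, x i ^ p))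
          = Real.exp (Real.log c + (∑ i, x i ^ p * Real.log (x i)) / ∑ i, x i ^ p) := by
            congr 1
            rw [Finset.sum_congr rfl (fun i _ => hlog i), ← Finset.mul_sum,
              Finset.sum_add_distrib, ← Finset.sum_mul]
            field_simp
      _ = c * Real.exp ((∑ i, x i ^ p * Real.log (x i)) / ∑ i, x i ^ p) := by
            rw [Real.exp_add, Real.exp_log hc]
  case isFalse h =>
    have hSp := sum_rpow_pos hn x hx p
    have hSq := sum_rpow_pos hn x hx q
    have hpq : p - q ≠ 0 := sub_ne_zero.mpr h
    rw [hsum, hsum, mul_div_mul_comm,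
      Real.mul_rpow (by positivity) (by positivity),
      ← Real.rpow_sub hc, ← Real.rpow_mul hc.le,
      mul_one_div, div_self hpq, Real.rpow_one]

lemma gini_scale {n : ℕ} (hn : 0 < n) (p q t : ℝ) (ht : 0 < t) (x : Fin n → ℝ)
    (hx : ∀ i, 0 < x i) :
    gini (t * p) (t * q) x = (gini p q (fun i => x i ^ t)) ^ (1 / t) := by
  have hpow : ∀ r : ℝ, ∀ i, (x i ^ t : ℝ) ^ r = x i ^ (t * r) := fun r i =>
    (Real.rpow_mul (hx i).le t r).symm
  unfold gini
  by_cases h : p = q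
  · subst h
    rw [if_pos rfl, if_pos rfl,
      Real.rpow_def_of_pos (Real.exp_pos _), Real.log_exp]
    congr 1
    have : ∀ i, (x i ^ t : ℝ) ^ p * Real.log (x i ^ t)
        = t * (x i ^ (t * p) * Real.log (x i)) := by
      intro i
      rw [hpow, Real.log_rpow (hx i)]
      ring
    rw [Finset.sum_congr rfl (fun i _ => this i), ← Finset.mul_sum]
    simp only [hpow]
    rw [mul_one_div, mul_div_assoc, mul_div_cancel_left₀ _ ht.ne']
  · have h' : t * p ≠ t * q := fun hc => h (mul_left_cancel₀ ht.ne' hc)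
    rw [if_neg h', if_neg h]
    simp only [hpow]
    have hr : (0:ℝ) < (∑ i, x i ^ (t * p)) / ∑ i, x i ^ (t * q) :=
      div_pos (sum_rpow_pos hn x hx _) (sum_rpow_pos hn x hx _)
    rw [← Real.rpow_mul hr.le]
    congr 1
    field_simp

theorem Gamma_cone (I : Set ℝ) (hI : I.Nonempty) (hIpos : I ⊆ Set.Ioi 0)
    (hIint : I.OrdConnected) (h0 : sInf (I * I⁻¹) = 0) (n : ℕ) (hn : 2 ≤ n)
    (t : ℝ) (ht : 0 < t) (w : (ℝ × ℝ) × (ℝ × ℝ)) (hw : w ∈ Gamma n I) :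
    t • w ∈ Gamma n I := by
  intro x hx
  have hn0 : 0 < n := by omega
  haveI : Nonempty (Fin n) := Fin.pos_iff_nonempty.mp hn0
  have hxpos : ∀ i, 0 < x i := fun i => hIpos (hx i)
  obtain ⟨im, -, hm⟩ := Finset.exists_min_image Finset.univ x Finset.univ_nonempty
  obtain ⟨iM, -, hM⟩ := Finset.exists_max_image Finset.univ x Finset.univ_nonempty
  set m := x im with hmdef
  set M := x iM with hMdef
  have hmpos : 0 < m := hxpos im
  have hMpos : 0 < M := hxpos iM
  -- find u, b ∈ I with u * (M/m)^t < b
  have hne : (I * I⁻¹).Nonempty := by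
    obtain ⟨a, ha⟩ := hI
    exact ⟨a * a⁻¹, Set.mul_mem_mul ha (Set.inv_mem_inv.mpr ha)⟩
  have hbdd : BddBelow (I * I⁻¹) := by
    refine ⟨0, fun z hz => ?_⟩
    obtain ⟨u, hu, v, hv, rfl⟩ := hz
    have hu' : 0 < u := hIpos hu
    have hv' : 0 < v := inv_pos.mp (hIpos (Set.mem_inv.mp hv))
    exact (mul_pos hu' hv').le
  have hεpos : (0:ℝ) < (m / M) ^ t := Real.rpow_pos_of_pos (div_pos hmpos hMpos) t
  have hlt : sInf (I * I⁻¹) < (m / M) ^ t := by rw [h0]; exact hεpos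
  obtain ⟨z, hz, hzlt⟩ := (csInf_lt_iff hbdd hne).mp hlt
  obtain ⟨u, hu, v, hv, rfl⟩ := hz
  set b : ℝ := v⁻¹ with hbdef
  have hb : b ∈ I := Set.mem_inv.mp hv
  have hupos : 0 < u := hIpos hu
  have hbpos : 0 < b := hIpos hb
  have hvb : v = b⁻¹ := by rw [hbdef, inv_inv]
  have hkey : u * (M / m) ^ t < b := by
    have h1 : (m / M) ^ t * (M / m) ^ t = 1 := by
      rw [← Real.mul_rpow (by positivity) (by positivity)]
      rw [div_mul_div_comm, mul_comm m M, div_self (by positivity), Real.one_rpow]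
    have h2 : u * b⁻¹ < (m / M) ^ t := by rwa [hvb] at hzlt
    have hR : (0:ℝ) < (M / m) ^ t := Real.rpow_pos_of_pos (div_pos hMpos hmpos) t
    have h3 : u * (M / m) ^ t / b < 1 := by
      rw [div_eq_mul_inv, mul_right_comm]
      calc u * b⁻¹ * (M / m) ^ t < (m / M) ^ t * (M / m) ^ t :=
            mul_lt_mul_of_pos_right h2 hR
        _ = 1 := h1
    exact (div_lt_one hbpos).mp h3
  -- define y = c * x^t ∈ I
  set c : ℝ := u / m ^ t with hcdef
  have hmt : (0:ℝ) < m ^ t := Real.rpow_pos_of_pos hmpos t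
  have hcpos : 0 < c := div_pos hupos hmt
  set y : Fin n → ℝ := fun i => c * x i ^ t with hydef
  have hypos : ∀ i, 0 < y i := fun i =>
    mul_pos hcpos (Real.rpow_pos_of_pos (hxpos i) t)
  have hyI : ∀ i, y i ∈ I := by
    intro i
    refine hIint.out hu hb ⟨?_, ?_⟩
    · have : m ^ t ≤ x i ^ t := Real.rpow_le_rpow hmpos.le (hm i (Finset.mem_univ i)) ht.le
      calc u = c * m ^ t := by rw [hcdef, div_mul_cancel₀ _ hmt.ne']
        _ ≤ c * x i ^ t := mul_le_mul_of_nonneg_left this hcpos.le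
    · have h1 : x i ^ t ≤ M ^ t := Real.rpow_le_rpow (hxpos i).le (hM i (Finset.mem_univ i)) ht.le
      have h2 : c * x i ^ t ≤ u * (M / m) ^ t := by
        rw [hcdef, Real.div_rpow hMpos.le hmpos.le, div_mul_eq_mul_div, ← mul_div_assoc]
        gcongr
      exact h2.trans hkey.le
  have hcomp := hw y hyI
  -- rewrite gini of x^t via y
  have hsmul : ∀ p q : ℝ, gini p q y = c * gini p q (fun i => x i ^ t) :=
    fun p q => gini_smul hn0 p q c hcpos _ (fun i => Real.rpow_pos_of_pos (hxpos i) t)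
  have hgpos : ∀ p q : ℝ, 0 < gini p q (fun i => x i ^ t) :=
    fun p q => gini_pos hn0 p q _ (fun i => Real.rpow_pos_of_pos (hxpos i) t)
  have hmain : gini w.1.1 w.1.2 (fun i => x i ^ t) ≤ gini w.2.1 w.2.2 (fun i => x i ^ t) := by
    rw [hsmul, hsmul] at hcomp
    exact le_of_mul_le_mul_left hcomp hcpos
  show gini (t • w).1.1 (t • w).1.2 x ≤ gini (t • w).2.1 (t • w).2.2 x
  simp only [Prod.smul_fst, Prod.smul_snd, smul_eq_mul]
  rw [gini_scale hn0 w.1.1 w.1.2 t ht x hxpos,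
    gini_scale hn0 w.2.1 w.2.2 t ht x hxpos]
  exact Real.rpow_le_rpow (hgpos _ _).le hmain (by positivity)
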